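/- Let 0 < c_L < c_H < 1. Then the function p ↦ J(c_L, c_H, p)/(1−p) is strictly increasing on the interval (0, 1): for all 0 < p₁ < p₂ < 1, J(c_L, c_H, p₁)/(1−p₁) < J(c_L, c_H, p₂)/(1−p₂). -/
import Mathlib

/-- Partial entropy function: φ(p) = p·log p for p > 0, φ(0) = 0. -/
noncomputable def phi (p : ℝ) : ℝ := if 0 < p then p * Real.log p else 0

/-- J(c_L, c_H, p) = p·φ(c_L) + (1−p)·φ(c_H) − φ(p·c_L + (1−p)·c_H). -/
noncomputable def J (cL cH p : ℝ) : ℝ :=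
  p * phi cL + (1 - p) * phi cH - phi (p * cL + (1 - p) * cH)

lemma phi_eq {p : ℝ} (hp : 0 < p) : phi p = p * Real.log p := if_pos hp

lemma J_div_key (cL cH : ℝ) (hcL : 0 < cL) (hLH : cL < cH) (p : ℝ)
    (hp0 : 0 < p) (hp1 : p < 1) :
    J cL cH p / (1 - p) =
      phi cH - phi cL -
        (cH - cL) *
          (((p * cL + (1 - p) * cH) * Real.log (p * cL + (1 - p) * cH)
              - cL * Real.log cL) / ((p * cL + (1 - p) * cH) - cL)) := by
  have hq : (0:ℝ) < 1 - p := by linarith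
  have hmL : cL < p * cL + (1 - p) * cH := by nlinarith
  have hm0 : (0:ℝ) < p * cL + (1 - p) * cH := lt_trans hcL hmL
  have hd : p * cL + (1 - p) * cH - cL = (1 - p) * (cH - cL) := by ring
  have hq' : (1 - p) ≠ 0 := ne_of_gt hq
  have hd' : cH - cL ≠ 0 := by intro h; linarith [hLH]
  rw [J, phi_eq hcL, phi_eq (lt_trans hcL hLH), phi_eq hm0, hd]
  field_simp
  ring

/-- The function p ↦ J(c_L, c_H, p)/(1−p) is strictly increasing on (0, 1). -/
theorem J_div_one_sub_p_strictMono (cL cH : ℝ)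
    (hcL : 0 < cL) (hLH : cL < cH) (hcH : cH < 1) :
    ∀ p₁ p₂ : ℝ, 0 < p₁ → p₁ < p₂ → p₂ < 1 →
      J cL cH p₁ / (1 - p₁) < J cL cH p₂ / (1 - p₂) := by
  intro p₁ p₂ h1 h12 h2
  have h1' : p₁ < 1 := lt_trans h12 h2
  have h2' : 0 < p₂ := lt_trans h1 h12
  set m₁ := p₁ * cL + (1 - p₁) * cH with hm1
  set m₂ := p₂ * cL + (1 - p₂) * cH with hm2
  have hm1L : cL < m₁ := by nlinarith
  have hm2L : cL < m₂ := by nlinarith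
  have hm21 : m₂ < m₁ := by nlinarith
  have hslope := Real.strictConvexOn_mul_log.secant_strict_mono
    (a := cL) (x := m₂) (y := m₁)
    (le_of_lt hcL) (le_of_lt (lt_trans hcL hm2L)) (le_of_lt (lt_trans hcL hm1L))
    (ne_of_gt hm2L) (ne_of_gt hm1L) hm21
  rw [J_div_key cL cH hcL hLH p₁ h1 h1', J_div_key cL cH hcL hLH p₂ h2' h2]
  have hd : (0:ℝ) < cH - cL := by linarith
  nlinarith [mul_lt_mul_of_pos_left hslope hd]
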